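/- Let m ≥ 1, let Ψ be a set of pairs of probability measures on ℝ^m, let ε > 0, Δ > 0, and let v ∈ ℝ^m be a unit vector (‖v‖₂ = 1). Suppose that for every pair (μᵢ, μⱼ) ∈ Ψ there exist a scalar α ∈ ℝ with |α| ≤ Δ such that μᵢ is the pushforward of μⱼ under the translation x ↦ x + αv (i.e., μᵢ is a translation of μⱼ by a vector parallel to v of Euclidean norm at most Δ). Let ζ_v be the law of Y·v where Y is a one-dimensional Laplace random variable with scale Δ/ε (i.e., ζ_v is the pushforward of the Laplace(Δ/ε) measure on ℝ under y ↦ y·v). Then the additive-noise mechanism with noise ζ_v satisfies (ε, 0)-distribution privacy with respect to Ψ: for every pair (μᵢ, μⱼ) ∈ Ψ and every measurable S ⊆ ℝ^m, (μᵢ ∗ ζ_v)(S) ≤ e^ε · (μⱼ ∗ ζ_v)(S). -/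

import Mathlib

open MeasureTheory ProbabilityTheory

/-- Convolution of two measures on `ℝ^m`: the law of `X + Z` with `X ∼ μ`, `Z ∼ ν` independent. -/
noncomputable def mconv {m : ℕ} (μ ν : Measure (Fin m → ℝ)) : Measure (Fin m → ℝ) :=
  (μ.prod ν).map (fun p => p.1 + p.2)

/-- The Euclidean (`L²`) norm on `ℝ^m`. -/
noncomputable def l2norm {m : ℕ} (x : Fin m → ℝ) : ℝ := Real.sqrt (∑ k, (x k) ^ 2)

/-- The one-dimensional Laplace measure with scale `b`. -/
noncomputable def lap1 (b : ℝ) : Measure ℝ :=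
  MeasureTheory.volume.withDensity
    (fun y => ENNReal.ofReal ((1 / (2 * b)) * Real.exp (-|y| / b)))

open scoped ENNReal

lemma lapden_meas (b : ℝ) :
    Measurable (fun y : ℝ => ENNReal.ofReal ((1 / (2 * b)) * Real.exp (-|y| / b))) := by
  apply ENNReal.measurable_ofReal.comp
  exact (measurable_const.mul ((measurable_neg.comp (_root_.continuous_abs.measurable)).div_const b).exp)

instance lap1_sfinite (b : ℝ) : SFinite (lap1 b) := by
  unfold lap1; infer_instance

lemma lap1_shift (b : ℝ) (hb : 0 < b) (α : ℝ) (T : Set ℝ) (hT : MeasurableSet T) :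
    lap1 b ((fun y => y + α) ⁻¹' T) ≤ ENNReal.ofReal (Real.exp (|α| / b)) * lap1 b T := by
  set f : ℝ → ℝ≥0∞ := fun y => ENNReal.ofReal ((1 / (2 * b)) * Real.exp (-|y| / b)) with hf
  have hfm : Measurable f := lapden_meas b
  have hTpre : MeasurableSet ((fun y : ℝ => y + α) ⁻¹' T) :=
    (measurable_add_const α) hT
  rw [lap1, withDensity_apply _ hTpre, withDensity_apply _ hT]
  have key : ∀ y : ℝ, f y ≤ ENNReal.ofReal (Real.exp (|α| / b)) * f (y + α) := by
    intro y
    have h2b : (0:ℝ) ≤ 1 / (2 * b) := by positivity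
    have habs : |y + α| ≤ |y| + |α| := abs_add_le y α
    have h1 : Real.exp (-|y| / b) ≤ Real.exp (|α| / b) * Real.exp (-|y + α| / b) := by
      rw [← Real.exp_add, Real.exp_le_exp, ← add_div]
      exact (div_le_div_iff_of_pos_right hb).mpr (by linarith)
    rw [hf]
    simp only []
    rw [← ENNReal.ofReal_mul (Real.exp_nonneg _)]
    apply ENNReal.ofReal_le_ofReal
    calc (1 / (2 * b)) * Real.exp (-|y| / b)
        ≤ (1 / (2 * b)) * (Real.exp (|α| / b) * Real.exp (-|y + α| / b)) :=
          mul_le_mul_of_nonneg_left h1 h2b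
      _ = Real.exp (|α| / b) * ((1 / (2 * b)) * Real.exp (-|y + α| / b)) := by ring
  calc ∫⁻ y in (fun y : ℝ => y + α) ⁻¹' T, f y
      ≤ ∫⁻ y in (fun y : ℝ => y + α) ⁻¹' T, ENNReal.ofReal (Real.exp (|α| / b)) * f (y + α) :=
        lintegral_mono fun y => key y
    _ = ENNReal.ofReal (Real.exp (|α| / b)) * ∫⁻ y in (fun y : ℝ => y + α) ⁻¹' T, f (y + α) := by
        exact lintegral_const_mul _ (hfm.comp (measurable_add_const α))
    _ = ENNReal.ofReal (Real.exp (|α| / b)) * ∫⁻ y in T, f y := by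
        congr 1
        have : (volume : Measure ℝ).map (fun y => y + α) = volume :=
          map_add_right_eq_self volume α
        conv_rhs => rw [← this]
        rw [setLIntegral_map hT hfm (measurable_add_const α)]

/-- **Directional Expected Value Mechanism** (Theorem 4.3): if every pair
`(μᵢ, μⱼ) ∈ Ψ` satisfies `μᵢ = (translation by αv)₊ μⱼ` for some scalar `α` with
`|α| ≤ Δ`, where `v` is a fixed unit vector, then adding noise `Y·v` with
`Y ∼ Laplace(Δ/ε)` gives `(ε, 0)`-distribution privacy with respect to `Ψ`. -/
theorem directional_expected_value_mechanism
    (m : ℕ) (hm : 1 ≤ m)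
    (Ψ : Set (Measure (Fin m → ℝ) × Measure (Fin m → ℝ)))
    (ε Δ : ℝ) (hε : 0 < ε) (hΔ : 0 < Δ)
    (v : Fin m → ℝ) (hv : l2norm v = 1)
    (hprob : ∀ p ∈ Ψ, IsProbabilityMeasure p.1 ∧ IsProbabilityMeasure p.2)
    (htrans : ∀ p ∈ Ψ, ∃ α : ℝ, |α| ≤ Δ ∧
      p.1 = p.2.map (fun x => x + α • v)) :
    ∀ p ∈ Ψ, ∀ S : Set (Fin m → ℝ), MeasurableSet S →
      mconv p.1 ((lap1 (Δ / ε)).map (fun y => y • v)) S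
        ≤ ENNReal.ofReal (Real.exp ε)
            * mconv p.2 ((lap1 (Δ / ε)).map (fun y => y • v)) S := by
  intro p hp S hS
  obtain ⟨α, hα, heq⟩ := htrans p hp
  set b := Δ / ε with hbdef
  have hbpos : 0 < b := div_pos hΔ hε
  have hsv : Measurable (fun y : ℝ => y • v) := by
    apply measurable_pi_lambda
    intro k
    simpa using (measurable_id.mul_const (v k))
  set ζ : Measure (Fin m → ℝ) := (lap1 b).map (fun y => y • v) with hζ
  have hζs : SFinite ζ := by rw [hζ]; infer_instance
  have hadd : Measurable (fun q : (Fin m → ℝ) × (Fin m → ℝ) => q.1 + q.2) :=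
    measurable_fst.add measurable_snd
  have hpre : MeasurableSet ((fun q : (Fin m → ℝ) × (Fin m → ℝ) => q.1 + q.2) ⁻¹' S) := hadd hS
  -- unfold the convolution as an integral
  have hconv : ∀ μ : Measure (Fin m → ℝ),
      mconv μ ζ S = ∫⁻ x, ζ {z | x + z ∈ S} ∂μ := by
    intro μ
    rw [mconv, Measure.map_apply hadd hS, Measure.prod_apply hpre]
    rfl
  -- the inner measure written with lap1
  have hinner : ∀ x : Fin m → ℝ, ζ {z | x + z ∈ S} = lap1 b {y : ℝ | x + y • v ∈ S} := by
    intro x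
    have hmz : MeasurableSet {z : Fin m → ℝ | x + z ∈ S} :=
      (measurable_const_add x) hS
    rw [hζ, Measure.map_apply hsv hmz]
    rfl
  have hgmeas : Measurable (fun x : Fin m → ℝ => ζ {z | x + z ∈ S}) := by
    have : ∀ x : Fin m → ℝ, {z : Fin m → ℝ | x + z ∈ S}
        = Prod.mk x ⁻¹' ((fun q : (Fin m → ℝ) × (Fin m → ℝ) => q.1 + q.2) ⁻¹' S) := by
      intro x; rfl
    simp_rw [this]
    exact measurable_measure_prodMk_left hpre
  have hmap : Measurable (fun x : Fin m → ℝ => x + α • v) :=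
    measurable_id.add_const _
  rw [hconv p.1, hconv p.2, heq, lintegral_map hgmeas hmap]
  have hεb : |α| / b ≤ ε := by
    rw [hbdef, div_div_eq_mul_div, div_le_iff₀ hΔ]
    calc |α| * ε ≤ Δ * ε := mul_le_mul_of_nonneg_right hα hε.le
      _ = ε * Δ := mul_comm _ _
  calc ∫⁻ x, ζ {z | x + α • v + z ∈ S} ∂p.2
      ≤ ∫⁻ x, ENNReal.ofReal (Real.exp ε) * ζ {z | x + z ∈ S} ∂p.2 := by
        apply lintegral_mono
        intro x
        have hrw : {y : ℝ | x + α • v + y • v ∈ S}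
            = (fun y : ℝ => y + α) ⁻¹' {y : ℝ | x + y • v ∈ S} := by
          have hxy : ∀ y : ℝ, x + α • v + y • v = x + (y + α) • v := by
            intro y; rw [add_smul]; abel
          ext y
          simp only [Set.mem_setOf_eq, Set.mem_preimage, hxy y]
        have hTm : MeasurableSet {y : ℝ | x + y • v ∈ S} := by
          have : Measurable (fun y : ℝ => x + y • v) := measurable_const.add hsv
          exact this hS
        calc ζ {z | x + α • v + z ∈ S}
            = lap1 b ((fun y : ℝ => y + α) ⁻¹' {y : ℝ | x + y • v ∈ S}) := by
              rw [hinner, hrw]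
          _ ≤ ENNReal.ofReal (Real.exp (|α| / b)) * lap1 b {y : ℝ | x + y • v ∈ S} :=
              lap1_shift b hbpos α _ hTm
          _ ≤ ENNReal.ofReal (Real.exp ε) * ζ {z | x + z ∈ S} := by
              rw [hinner]
              exact mul_le_mul_left (ENNReal.ofReal_le_ofReal (Real.exp_le_exp.mpr hεb)) _
    _ = ENNReal.ofReal (Real.exp ε) * ∫⁻ x, ζ {z | x + z ∈ S} ∂p.2 :=
        lintegral_const_mul _ hgmeas
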